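/- Let f : {0,1}ⁿ → F₂ be a polynomial of the form f(x) = Σ_{i<j<k} α_{ijk} x_i x_j x_k + Σ_{i<j} β_{ij} x_i x_j + Σ_i γ_i x_i with the α coefficients arbitrary but fixed and the β and γ coefficients chosen independently and uniformly at random from {0,1}. Then E[ngap(f)⁴] ≤ 3·2^{-2n}, where ngap(f) = (1/2ⁿ)·Σ_x (-1)^{f(x)}. -/
import Mathlib

open Finset

/-- The real character `(-1)^a` on `ZMod 2`. -/
def chr (a : ZMod 2) : ℝ := if a = 0 then 1 else -1

lemma zmod2_cases : ∀ a : ZMod 2, a = 0 ∨ a = 1 := by decide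

lemma chr_add (a b : ZMod 2) : chr (a + b) = chr a * chr b := by
  rcases zmod2_cases a with h | h <;> rcases zmod2_cases b with h' | h' <;>
    subst h <;> subst h' <;>
    simp only [chr, show ((1 : ZMod 2) + 1 : ZMod 2) = 0 from by decide,
      add_zero, zero_add] <;> norm_num

lemma chr_sum {ι : Type*} (s : Finset ι) (g : ι → ZMod 2) :
    chr (∑ i ∈ s, g i) = ∏ i ∈ s, chr (g i) := by
  classical
  induction s using Finset.cons_induction with
  | empty => simp [chr]
  | cons i s hi ih => rw [Finset.sum_cons, Finset.prod_cons, chr_add, ih]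

lemma chr_le_one (a : ZMod 2) : chr a ≤ 1 := by
  rcases zmod2_cases a with h | h <;> subst h <;> norm_num [chr]

lemma sum_chr_single (u : ZMod 2) :
    ∑ c : ZMod 2, chr (c * u) = if u = 0 then 2 else 0 := by
  have huniv : (Finset.univ : Finset (ZMod 2)) = {0, 1} := by decide
  rw [huniv, Finset.sum_insert (by decide), Finset.sum_singleton]
  rcases zmod2_cases u with h | h <;> subst h <;> norm_num [chr]

lemma sum_char {ι : Type*} [Fintype ι] [DecidableEq ι] (s : ι → ZMod 2) :
    ∑ γ : ι → ZMod 2, chr (∑ i, γ i * s i)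
      = if ∀ i, s i = 0 then (Fintype.card (ι → ZMod 2) : ℝ) else 0 := by
  simp_rw [chr_sum]
  rw [← Fintype.prod_sum fun i c => chr (c * s i)]
  simp_rw [sum_chr_single]
  by_cases h : ∀ i, s i = 0
  · simp only [h, if_true, Finset.prod_const, Finset.card_univ]
    rw [Fintype.card_fun]
    push_cast
    norm_num
  · push_neg at h
    obtain ⟨i, hi⟩ := h
    rw [if_neg (by push_neg; exact ⟨i, hi⟩)]
    exact Finset.prod_eq_zero (Finset.mem_univ i) (by simp [hi])

lemma core {ι κ : Type*} [Fintype ι] [Fintype κ] [DecidableEq ι] [DecidableEq κ]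
    (C : ZMod 2) (q : κ → ZMod 2) (s : ι → ZMod 2) :
    ∑ β : κ → ZMod 2, ∑ γ : ι → ZMod 2,
        chr (C + ∑ p, β p * q p + ∑ i, γ i * s i)
      = chr C * ((if ∀ p, q p = 0 then (Fintype.card (κ → ZMod 2) : ℝ) else 0)
          * (if ∀ i, s i = 0 then (Fintype.card (ι → ZMod 2) : ℝ) else 0)) := by
  simp_rw [chr_add]
  simp_rw [← Finset.mul_sum]
  simp_rw [← Finset.sum_mul]
  rw [sum_char, ← Finset.mul_sum, sum_char, mul_assoc]

lemma sum_pow_four {ι : Type*} [Fintype ι] (h : ι → ℝ) :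
    (∑ x, h x) ^ 4 = ∑ a, ∑ c, ∑ b, ∑ d, (h a * h b) * (h c * h d) := by
  calc (∑ x, h x) ^ 4
      = ((∑ a, h a) * (∑ b, h b)) * ((∑ c, h c) * (∑ d, h d)) := by ring
    _ = (∑ a, ∑ b, h a * h b) * (∑ c, ∑ d, h c * h d) := by
        rw [Finset.sum_mul_sum, Finset.sum_mul_sum]
    _ = ∑ a, ∑ c, (∑ b, h a * h b) * (∑ d, h c * h d) := Finset.sum_mul_sum _ _ _ _
    _ = ∑ a, ∑ c, ∑ b, ∑ d, (h a * h b) * (h c * h d) :=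
        Finset.sum_congr rfl fun a _ => Finset.sum_congr rfl fun c _ =>
          Finset.sum_mul_sum _ _ _ _

lemma swap2in4 {A B ι : Type*} [Fintype A] [Fintype B] [Fintype ι]
    (f : A → B → ι → ι → ι → ι → ℝ) :
    (∑ β : A, ∑ γ : B, ∑ a : ι, ∑ c : ι, ∑ b : ι, ∑ d : ι, f β γ a c b d)
      = ∑ a, ∑ c, ∑ b, ∑ d, ∑ β, ∑ γ, f β γ a c b d := by
  calc (∑ β : A, ∑ γ : B, ∑ a : ι, ∑ c : ι, ∑ b : ι, ∑ d : ι, f β γ a c b d)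
      = ∑ β, ∑ a, ∑ γ, ∑ c, ∑ b, ∑ d, f β γ a c b d :=
        Finset.sum_congr rfl fun _ _ => Finset.sum_comm
    _ = ∑ a, ∑ β, ∑ γ, ∑ c, ∑ b, ∑ d, f β γ a c b d := Finset.sum_comm
    _ = ∑ a, ∑ β, ∑ c, ∑ γ, ∑ b, ∑ d, f β γ a c b d :=
        Finset.sum_congr rfl fun _ _ => Finset.sum_congr rfl fun _ _ => Finset.sum_comm
    _ = ∑ a, ∑ c, ∑ β, ∑ γ, ∑ b, ∑ d, f β γ a c b d :=
        Finset.sum_congr rfl fun _ _ => Finset.sum_comm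
    _ = ∑ a, ∑ c, ∑ β, ∑ b, ∑ γ, ∑ d, f β γ a c b d :=
        Finset.sum_congr rfl fun _ _ => Finset.sum_congr rfl fun _ _ =>
          Finset.sum_congr rfl fun _ _ => Finset.sum_comm
    _ = ∑ a, ∑ c, ∑ b, ∑ β, ∑ γ, ∑ d, f β γ a c b d :=
        Finset.sum_congr rfl fun _ _ => Finset.sum_congr rfl fun _ _ => Finset.sum_comm
    _ = ∑ a, ∑ c, ∑ b, ∑ β, ∑ d, ∑ γ, f β γ a c b d :=
        Finset.sum_congr rfl fun _ _ => Finset.sum_congr rfl fun _ _ =>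
          Finset.sum_congr rfl fun _ _ => Finset.sum_congr rfl fun _ _ => Finset.sum_comm
    _ = ∑ a, ∑ c, ∑ b, ∑ d, ∑ β, ∑ γ, f β γ a c b d :=
        Finset.sum_congr rfl fun _ _ => Finset.sum_congr rfl fun _ _ =>
          Finset.sum_congr rfl fun _ _ => Finset.sum_comm


lemma pairing {n : ℕ} (x y z w : Fin n → ZMod 2)
    (hq : ∀ p : {p : Fin n × Fin n // p.1 < p.2},
        x p.1.1 * x p.1.2 + y p.1.1 * y p.1.2 + (z p.1.1 * z p.1.2 + w p.1.1 * w p.1.2) = 0)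
    (hl : ∀ i, x i + y i + (z i + w i) = 0) :
    (x = y ∧ z = w) ∨ (x = z ∧ y = w) ∨ (x = w ∧ y = z) := by
  have h2 : ∀ a b : ZMod 2, a + b = 0 → b = a := by decide
  have hone : ∀ a : ZMod 2, a ≠ 0 → a = 1 := by decide
  have hw : ∀ i, w i = x i + y i + z i := by
    intro i
    have hli := hl i
    revert hli
    generalize x i = a; generalize y i = b; generalize z i = c; generalize w i = d
    revert a b c d; decide
  have key : ∀ i j : Fin n, (x i + y i) * (x j + z j) = (x j + y j) * (x i + z i) := by
    have main : ∀ xi xj yi yj zi zj : ZMod 2,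
        xi * xj + yi * yj + (zi * zj + (xi + yi + zi) * (xj + yj + zj)) = 0 →
        (xi + yi) * (xj + zj) = (xj + yj) * (xi + zi) := by decide
    intro i j
    rcases lt_trichotomy i j with h | h | h
    · have hq' := hq ⟨(i, j), h⟩
      rw [hw i, hw j] at hq'
      exact main _ _ _ _ _ _ hq'
    · subst h; ring
    · have hq' := hq ⟨(j, i), h⟩
      rw [hw j, hw i] at hq'
      exact (main _ _ _ _ _ _ hq').symm
  by_cases ha : ∀ i, x i + y i = 0
  · left
    constructor
    · funext i; exact (h2 _ _ (ha i)).symm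
    · funext i
      have e : ∀ a b c d : ZMod 2, d = a + b + c → a + b = 0 → c = d := by decide
      exact e _ _ _ _ (hw i) (ha i)
  · push_neg at ha
    obtain ⟨i0, hi0⟩ := ha
    have hx1 : x i0 + y i0 = 1 := hone _ hi0
    by_cases hb : x i0 + z i0 = 0
    · right; left
      have hbz : ∀ j, x j + z j = 0 := by
        intro j
        have hk := key i0 j
        rw [hx1, hb, one_mul, mul_zero] at hk
        exact hk
      constructor
      · funext j; exact (h2 _ _ (hbz j)).symm
      · funext j
        have e : ∀ a b c d : ZMod 2, d = a + b + c → a + c = 0 → b = d := by decide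
        exact e _ _ _ _ (hw j) (hbz j)
    · right; right
      have hb1 : x i0 + z i0 = 1 := hone _ hb
      have hab : ∀ j, x j + z j = x j + y j := by
        intro j
        have hk := key j i0
        rw [hx1, hb1, one_mul, mul_one] at hk
        exact hk.symm
      constructor
      · funext j
        have e : ∀ a b c d : ZMod 2, d = a + b + c → a + c = a + b → a = d := by decide
        exact e _ _ _ _ (hw j) (hab j)
      · funext j
        have e : ∀ a b c : ZMod 2, a + c = a + b → b = c := by decide
        exact e _ _ _ (hab j)


lemma ind_nonneg (P : Prop) [Decidable P] : (0:ℝ) ≤ if P then 1 else 0 := by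
  split <;> norm_num

lemma master {ι κ V : Type*} [Fintype ι] [Fintype κ] [Fintype V]
    [DecidableEq ι] [DecidableEq κ] [DecidableEq V]
    (A : V → ZMod 2) (qq : V → κ → ZMod 2) (ll : V → ι → ZMod 2)
    (pair : ∀ x y z w : V,
      (∀ p, qq x p + qq y p + (qq z p + qq w p) = 0) →
      (∀ i, ll x i + ll y i + (ll z i + ll w i) = 0) →
      (x = y ∧ z = w) ∨ (x = z ∧ y = w) ∨ (x = w ∧ y = z)) :
    ∑ β : κ → ZMod 2, ∑ γ : ι → ZMod 2,
        (∑ x : V, chr (A x + ∑ p, β p * qq x p + ∑ i, γ i * ll x i)) ^ 4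
      ≤ 3 * (Fintype.card V : ℝ) ^ 2
          * ((Fintype.card (κ → ZMod 2) : ℝ) * (Fintype.card (ι → ZMod 2) : ℝ)) := by
  set D : ℝ := (Fintype.card (κ → ZMod 2) : ℝ) with hDdef
  set E : ℝ := (Fintype.card (ι → ZMod 2) : ℝ) with hEdef
  have hD : 0 ≤ D := by positivity
  have hE : 0 ≤ E := by positivity
  -- Step 1: expand the fourth power and swap sums
  have step1 : ∑ β : κ → ZMod 2, ∑ γ : ι → ZMod 2,
        (∑ x : V, chr (A x + ∑ p, β p * qq x p + ∑ i, γ i * ll x i)) ^ 4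
      = ∑ a : V, ∑ c : V, ∑ b : V, ∑ d : V, ∑ β : κ → ZMod 2, ∑ γ : ι → ZMod 2,
          (chr (A a + ∑ p, β p * qq a p + ∑ i, γ i * ll a i)
            * chr (A b + ∑ p, β p * qq b p + ∑ i, γ i * ll b i))
          * (chr (A c + ∑ p, β p * qq c p + ∑ i, γ i * ll c i)
            * chr (A d + ∑ p, β p * qq d p + ∑ i, γ i * ll d i)) := by
    simp_rw [sum_pow_four]
    exact swap2in4 _
  rw [step1]
  -- Step 2: evaluate the inner double sum
  have key : ∀ a c b d : V, (∑ β : κ → ZMod 2, ∑ γ : ι → ZMod 2,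
          (chr (A a + ∑ p, β p * qq a p + ∑ i, γ i * ll a i)
            * chr (A b + ∑ p, β p * qq b p + ∑ i, γ i * ll b i))
          * (chr (A c + ∑ p, β p * qq c p + ∑ i, γ i * ll c i)
            * chr (A d + ∑ p, β p * qq d p + ∑ i, γ i * ll d i)))
      = chr (A a + A b + (A c + A d)) *
          ((if ∀ p, qq a p + qq b p + (qq c p + qq d p) = 0 then D else 0)
            * (if ∀ i, ll a i + ll b i + (ll c i + ll d i) = 0 then E else 0)) := by
    intro a c b d
    have harg : ∀ (β : κ → ZMod 2) (γ : ι → ZMod 2),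
        ((A a + ∑ p, β p * qq a p + ∑ i, γ i * ll a i)
          + (A b + ∑ p, β p * qq b p + ∑ i, γ i * ll b i))
        + ((A c + ∑ p, β p * qq c p + ∑ i, γ i * ll c i)
          + (A d + ∑ p, β p * qq d p + ∑ i, γ i * ll d i))
        = (A a + A b + (A c + A d))
          + (∑ p, β p * (qq a p + qq b p + (qq c p + qq d p)))
          + (∑ i, γ i * (ll a i + ll b i + (ll c i + ll d i))) := by
      intro β γ
      simp only [mul_add, Finset.sum_add_distrib]
      ring
    simp_rw [← chr_add, harg]
    rw [core]
  calc ∑ a : V, ∑ c : V, ∑ b : V, ∑ d : V, ∑ β : κ → ZMod 2, ∑ γ : ι → ZMod 2,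
          (chr (A a + ∑ p, β p * qq a p + ∑ i, γ i * ll a i)
            * chr (A b + ∑ p, β p * qq b p + ∑ i, γ i * ll b i))
          * (chr (A c + ∑ p, β p * qq c p + ∑ i, γ i * ll c i)
            * chr (A d + ∑ p, β p * qq d p + ∑ i, γ i * ll d i))
      = ∑ a : V, ∑ c : V, ∑ b : V, ∑ d : V, chr (A a + A b + (A c + A d)) *
          ((if ∀ p, qq a p + qq b p + (qq c p + qq d p) = 0 then D else 0)
            * (if ∀ i, ll a i + ll b i + (ll c i + ll d i) = 0 then E else 0)) := by
        exact Finset.sum_congr rfl fun a _ => Finset.sum_congr rfl fun c _ =>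
          Finset.sum_congr rfl fun b _ => Finset.sum_congr rfl fun d _ => key a c b d
    _ ≤ ∑ a : V, ∑ c : V, ∑ b : V, ∑ d : V, D * E *
          ((if a = b ∧ c = d then (1:ℝ) else 0) + (if a = c ∧ b = d then 1 else 0)
            + (if a = d ∧ b = c then 1 else 0)) := by
        apply Finset.sum_le_sum; intro a _
        apply Finset.sum_le_sum; intro c _
        apply Finset.sum_le_sum; intro b _
        apply Finset.sum_le_sum; intro d _
        by_cases h1 : ∀ p, qq a p + qq b p + (qq c p + qq d p) = 0
        · by_cases h2 : ∀ i, ll a i + ll b i + (ll c i + ll d i) = 0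
          · rw [if_pos h1, if_pos h2]
            have hind : (1:ℝ) ≤ (if a = b ∧ c = d then (1:ℝ) else 0)
                + (if a = c ∧ b = d then 1 else 0) + (if a = d ∧ b = c then 1 else 0) := by
              have n1 := ind_nonneg (a = b ∧ c = d)
              have n2 := ind_nonneg (a = c ∧ b = d)
              have n3 := ind_nonneg (a = d ∧ b = c)
              rcases pair a b c d h1 h2 with h | h | h
              · rw [if_pos h]; linarith
              · rw [if_pos h]; linarith
              · rw [if_pos h]; linarith
            calc chr (A a + A b + (A c + A d)) * (D * E) ≤ 1 * (D * E) :=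
                  mul_le_mul_of_nonneg_right (chr_le_one _) (by positivity)
              _ = D * E := one_mul _
              _ ≤ D * E * ((if a = b ∧ c = d then (1:ℝ) else 0)
                  + (if a = c ∧ b = d then 1 else 0) + (if a = d ∧ b = c then 1 else 0)) :=
                  le_mul_of_one_le_right (by positivity) hind
          · rw [if_neg h2, mul_zero, mul_zero]
            have n1 := ind_nonneg (a = b ∧ c = d)
            have n2 := ind_nonneg (a = c ∧ b = d)
            have n3 := ind_nonneg (a = d ∧ b = c)
            have : (0:ℝ) ≤ D * E := by positivity
            nlinarith
        · rw [if_neg h1, zero_mul, mul_zero]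
          have n1 := ind_nonneg (a = b ∧ c = d)
          have n2 := ind_nonneg (a = c ∧ b = d)
          have n3 := ind_nonneg (a = d ∧ b = c)
          have : (0:ℝ) ≤ D * E := by positivity
          nlinarith
    _ = 3 * (Fintype.card V : ℝ) ^ 2 * (D * E) := by
        have n1 : ∀ a c : V, (∑ b : V, ∑ d : V, if a = b ∧ c = d then (1:ℝ) else 0) = 1 := by
          intro a c; simp [ite_and, Finset.sum_ite_eq]
        have n2 : ∀ a c : V, (∑ b : V, ∑ d : V, if a = c ∧ b = d then (1:ℝ) else 0)
            = if a = c then (Fintype.card V : ℝ) else 0 := by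
          intro a c
          by_cases h : a = c <;> simp [h, Finset.sum_ite_eq, Finset.card_univ]
        have n3 : ∀ a c : V, (∑ b : V, ∑ d : V, if a = d ∧ b = c then (1:ℝ) else 0) = 1 := by
          intro a c; simp [ite_and, Finset.sum_ite_eq]
        have inner : ∀ a c : V, (∑ b : V, ∑ d : V, D * E *
              ((if a = b ∧ c = d then (1:ℝ) else 0) + (if a = c ∧ b = d then 1 else 0)
                + (if a = d ∧ b = c then 1 else 0)))
            = D * E * (2 + if a = c then (Fintype.card V : ℝ) else 0) := by
          intro a c
          calc (∑ b : V, ∑ d : V, D * E *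
              ((if a = b ∧ c = d then (1:ℝ) else 0) + (if a = c ∧ b = d then 1 else 0)
                + (if a = d ∧ b = c then 1 else 0)))
              = D * E * (∑ b : V, ∑ d : V,
                ((if a = b ∧ c = d then (1:ℝ) else 0) + (if a = c ∧ b = d then 1 else 0)
                  + (if a = d ∧ b = c then 1 else 0))) := by
                simp_rw [← Finset.mul_sum]
            _ = D * E * ((∑ b : V, ∑ d : V, if a = b ∧ c = d then (1:ℝ) else 0)
                + (∑ b : V, ∑ d : V, if a = c ∧ b = d then (1:ℝ) else 0)
                + (∑ b : V, ∑ d : V, if a = d ∧ b = c then (1:ℝ) else 0)) := by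
                simp_rw [Finset.sum_add_distrib]
            _ = D * E * (2 + if a = c then (Fintype.card V : ℝ) else 0) := by
                rw [n1, n2, n3]; ring
        calc (∑ a : V, ∑ c : V, ∑ b : V, ∑ d : V, D * E *
              ((if a = b ∧ c = d then (1:ℝ) else 0) + (if a = c ∧ b = d then 1 else 0)
                + (if a = d ∧ b = c then 1 else 0)))
            = ∑ a : V, ∑ c : V, D * E * (2 + if a = c then (Fintype.card V : ℝ) else 0) :=
              Finset.sum_congr rfl fun a _ => Finset.sum_congr rfl fun c _ => inner a c
          _ = 3 * (Fintype.card V : ℝ) ^ 2 * (D * E) := by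
              simp only [mul_add, Finset.sum_add_distrib, Finset.mul_sum]
              simp [Finset.sum_ite_eq, Finset.sum_const, Finset.card_univ]
              ring

/-- For a degree-3 polynomial over `F₂` with arbitrary fixed cubic coefficients `α`
and uniformly random quadratic and linear coefficients `β`, `γ`,
the fourth moment of the normalized gap satisfies `E[ngap(f)⁴] ≤ 3·2^{-2n}`. -/
theorem fourth_moment_ngap_deg3 (n : ℕ) (hn : 0 < n)
    (α : {t : Fin n × Fin n × Fin n // t.1 < t.2.1 ∧ t.2.1 < t.2.2} → ZMod 2) :
    (∑ β : {p : Fin n × Fin n // p.1 < p.2} → ZMod 2, ∑ γ : Fin n → ZMod 2,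
        ((1 / 2 ^ n : ℝ) * ∑ x : Fin n → ZMod 2,
          (if (∑ t : {t : Fin n × Fin n × Fin n // t.1 < t.2.1 ∧ t.2.1 < t.2.2},
                  α t * x t.1.1 * x t.1.2.1 * x t.1.2.2)
              + (∑ p : {p : Fin n × Fin n // p.1 < p.2}, β p * x p.1.1 * x p.1.2)
              + (∑ i : Fin n, γ i * x i) = 0 then (1 : ℝ) else -1)) ^ 4)
      / ((Fintype.card ({p : Fin n × Fin n // p.1 < p.2} → ZMod 2) : ℝ)
          * (Fintype.card (Fin n → ZMod 2) : ℝ))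
    ≤ 3 / 2 ^ (2 * n) := by
  classical
  have hrw : ∀ e : ZMod 2, (if e = 0 then (1:ℝ) else -1) = chr e := fun _ => rfl
  simp only [hrw]
  simp_rw [mul_assoc, mul_pow, ← Finset.mul_sum]
  have hm := master (κ := {p : Fin n × Fin n // p.1 < p.2}) (ι := Fin n)
      (V := Fin n → ZMod 2)
      (fun x => ∑ t : {t : Fin n × Fin n × Fin n // t.1 < t.2.1 ∧ t.2.1 < t.2.2},
        α t * (x t.1.1 * (x t.1.2.1 * x t.1.2.2)))
      (fun x p => x p.1.1 * x p.1.2) (fun x i => x i)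
      (fun x y z w hq hl => pairing x y z w hq hl)
  set D : ℝ := (Fintype.card ({p : Fin n × Fin n // p.1 < p.2} → ZMod 2) : ℝ) with hD
  set E : ℝ := (Fintype.card (Fin n → ZMod 2) : ℝ) with hE
  have hDpos : 0 < D := by positivity
  have hEpos : 0 < E := by positivity
  have hcard : (Fintype.card (Fin n → ZMod 2) : ℝ) = 2 ^ n := by
    rw [Fintype.card_fun]
    push_cast
    norm_num
  calc ((1 / 2 ^ n : ℝ) ^ 4 * ∑ β : {p : Fin n × Fin n // p.1 < p.2} → ZMod 2,
          ∑ γ : Fin n → ZMod 2,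
          (∑ x : Fin n → ZMod 2,
            chr ((∑ t : {t : Fin n × Fin n × Fin n // t.1 < t.2.1 ∧ t.2.1 < t.2.2},
                  α t * (x t.1.1 * (x t.1.2.1 * x t.1.2.2)))
              + (∑ p : {p : Fin n × Fin n // p.1 < p.2}, β p * (x p.1.1 * x p.1.2))
              + (∑ i : Fin n, γ i * x i))) ^ 4) / (D * E)
      ≤ ((1 / 2 ^ n : ℝ) ^ 4 * (3 * (Fintype.card (Fin n → ZMod 2) : ℝ) ^ 2 * (D * E)))
          / (D * E) := by
        gcongr
    _ = 3 / 2 ^ (2 * n) := by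
        rw [hcard]
        have h2 : (2:ℝ) ^ n ≠ 0 := by positivity
        field_simp
        ring
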